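/- For every U in SU(2), Matrix.det (π(U)) = 1; hence π maps SU(2) into the special orthogonal group SO(3). -/

import Mathlib

set_option maxHeartbeats 1000000

open Matrix Complex

noncomputable def sigma : Fin 3 → Matrix (Fin 2) (Fin 2) ℂ :=
  ![!![0, 1; 1, 0], !![0, -Complex.I; Complex.I, 0], !![1, 0; 0, -1]]

abbrev SU2 := Matrix.specialUnitaryGroup (Fin 2) ℂ

noncomputable def piMap (U : Matrix (Fin 2) (Fin 2) ℂ) : Matrix (Fin 3) (Fin 3) ℝ :=
  Matrix.of fun i j => (((1 : ℂ) / 2) * Matrix.trace (sigma i * U * sigma j * Uᴴ)).re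

lemma piMap_explicit (a b : ℂ) :
    piMap !![a, b; -(starRingEnd ℂ) b, (starRingEnd ℂ) a] =
    !![a.re^2 - a.im^2 - b.re^2 + b.im^2, 2*b.re*b.im + 2*a.re*a.im, 2*a.im*b.im - 2*a.re*b.re;
       2*b.re*b.im - 2*a.re*a.im, a.re^2 - a.im^2 + b.re^2 - b.im^2, 2*a.im*b.re + 2*a.re*b.im;
       2*a.im*b.im + 2*a.re*b.re, 2*a.im*b.re - 2*a.re*b.im, a.re^2 + a.im^2 - b.re^2 - b.im^2] := by
  ext i j
  fin_cases i <;> fin_cases j <;>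
    simp [piMap, sigma, Matrix.trace_fin_two, Matrix.mul_apply, Fin.sum_univ_two,
      Matrix.conjTranspose_apply, Complex.mul_re, Complex.mul_im, Complex.div_re,
      Complex.div_im, Complex.normSq_apply] <;> ring

theorem stmt11 (U : SU2) :
    Matrix.det (piMap (U : Matrix (Fin 2) (Fin 2) ℂ)) = 1 := by
  obtain ⟨M, hM⟩ := U
  rw [Matrix.mem_specialUnitaryGroup_iff] at hM
  obtain ⟨hU, hdet⟩ := hM
  have hU' : Mᴴ * M = 1 := Matrix.mem_unitaryGroup_iff'.mp hU
  have hadj : Matrix.adjugate M = Mᴴ := by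
    have h1 : M * Matrix.adjugate M = 1 := by
      rw [Matrix.mul_adjugate, hdet, one_smul]
    calc Matrix.adjugate M = (Mᴴ * M) * Matrix.adjugate M := by rw [hU', one_mul]
    _ = Mᴴ * (M * Matrix.adjugate M) := by rw [Matrix.mul_assoc]
    _ = Mᴴ := by rw [h1, mul_one]
  have hMeq : M = !![M 0 0, M 0 1; M 1 0, M 1 1] := (Matrix.etaExpand_eq M).symm
  set a := M 0 0 with ha
  set b := M 0 1 with hb
  set c := M 1 0 with hc
  set d := M 1 1 with hd
  have hadj2 : Matrix.adjugate M = !![d, -b; -c, a] := by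
    rw [hMeq, Matrix.adjugate_fin_two]; simp
  have hda : d = starRingEnd ℂ a := by
    have := congrFun (congrFun (hadj2.symm.trans hadj) 0) 0
    simpa [Matrix.conjTranspose_apply] using this
  have hcb : c = -starRingEnd ℂ b := by
    have h := congrFun (congrFun (hadj2.symm.trans hadj) 1) 0
    simp [Matrix.conjTranspose_apply] at h
    rw [← h]; simp
  have hnorm : a.re^2 + a.im^2 + (b.re^2 + b.im^2) = 1 := by
    have hd1 : a * d - b * c = 1 := by
      rw [hMeq, Matrix.det_fin_two_of] at hdet; simpa using hdet
    rw [hda, hcb] at hd1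
    have h2 := congrArg Complex.re hd1
    simp [Complex.mul_re, Complex.conj_re, Complex.conj_im] at h2
    nlinarith [h2]
  show (piMap M).det = 1
  rw [hMeq, hda, hcb, piMap_explicit, Matrix.det_fin_three]
  simp only [Matrix.of_apply, Matrix.cons_val', Matrix.cons_val_zero, Matrix.cons_val_one, Matrix.cons_val_two, Matrix.head_cons, Matrix.tail_cons, Matrix.vecHead, Matrix.vecTail, Function.comp_apply, Fin.succ_zero_eq_one, Fin.succ_one_eq_two]
  norm_num
  linear_combination ((a.re^2 + a.im^2 + (b.re^2 + b.im^2))^2 +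
    (a.re^2 + a.im^2 + (b.re^2 + b.im^2)) + 1) * hnorm
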